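/- For any natural number n ≥ 2, the sum of (log p)/p over primes p dividing n is O(log log n), i.e., there is an absolute constant C such that ∑_{p | n} (log p)/p ≤ C · log log n for all n ≥ 3. -/

import Mathlib

open Finset Real

noncomputable def thetaFn (N : ℕ) : ℝ :=
  ∑ p ∈ Finset.range (N + 1), if p.Prime then Real.log p else 0

noncomputable def SFn (N : ℕ) : ℝ :=
  ∑ p ∈ Finset.range (N + 1), if p.Prime then Real.log p / p else 0

lemma thetaFn_nonneg (N : ℕ) : 0 ≤ thetaFn N := by
  apply Finset.sum_nonneg
  intro p hp
  split
  · rename_i h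
    exact Real.log_nonneg (by exact_mod_cast h.one_lt.le)
  · exact le_refl 0

lemma thetaFn_le (N : ℕ) : thetaFn N ≤ N * Real.log 4 := by
  have h1 : thetaFn N = Real.log (primorial N) := by
    rw [primorial, Nat.cast_prod, Real.log_prod]
    · rw [thetaFn, Finset.sum_filter]
    · intro p hp
      have := (Finset.mem_filter.1 hp).2.pos
      positivity
  rw [h1]
  calc Real.log (primorial N) ≤ Real.log ((4 : ℕ) ^ N) := by
        apply Real.log_le_log (by exact_mod_cast primorial_pos N)
        exact_mod_cast primorial_le_4_pow N
    _ = N * Real.log 4 := by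
        push_cast
        rw [Real.log_pow]

lemma key_step (N : ℕ) (hN : 1 ≤ N) :
    thetaFn N / N ≤ thetaFn N / (N + 1) + Real.log 4 * (Real.log (N + 1) - Real.log N) := by
  have hx : (1 : ℝ) ≤ (N : ℝ) := by exact_mod_cast hN
  have hx0 : (0 : ℝ) < N := by linarith
  have hθ := thetaFn_le N
  have hθ0 := thetaFn_nonneg N
  have hlog : 1 / ((N : ℝ) + 1) ≤ Real.log (N + 1) - Real.log N := by
    have hpos : (0 : ℝ) < (N : ℝ) / (N + 1) := by positivity
    have h1 := Real.log_le_sub_one_of_pos hpos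
    rw [Real.log_div (by linarith) (by linarith)] at h1
    have : (N : ℝ) / (N + 1) - 1 = -(1 / (N + 1)) := by field_simp; ring
    rw [this] at h1
    linarith
  have h4 : (0 : ℝ) < Real.log 4 := Real.log_pos (by norm_num)
  have hdiff : thetaFn N / N - thetaFn N / (N + 1) ≤ Real.log 4 / (N + 1) := by
    rw [div_sub_div _ _ (ne_of_gt hx0) (by linarith)]
    rw [div_le_div_iff₀ (by positivity) (by positivity)]
    ring_nf
    nlinarith [mul_le_mul_of_nonneg_right hθ (le_of_lt hx0)]
  have h5 : Real.log 4 / (N + 1) ≤ Real.log 4 * (Real.log (N + 1) - Real.log N) := by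
    rw [div_eq_mul_one_div]
    exact mul_le_mul_of_nonneg_left hlog h4.le
  linarith

lemma SFn_bound : ∀ N : ℕ, 1 ≤ N → SFn N ≤ thetaFn N / N + Real.log 4 * Real.log N := by
  intro N hN'
  induction N, hN' using Nat.le_induction with
  | base =>
      have h1 : SFn 1 = 0 := by
        simp [SFn, Finset.sum_range_succ, Nat.not_prime_zero, Nat.not_prime_one]
      have h2 : thetaFn 1 = 0 := by
        simp [thetaFn, Finset.sum_range_succ, Nat.not_prime_zero, Nat.not_prime_one]
      simp [h1, h2]
  | succ N hN ih =>
      have ihh := ih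
      have hS : SFn (N + 1) = SFn N + (if (N + 1).Prime then Real.log (N + 1) / (N + 1) else 0) := by
        rw [SFn, SFn, Finset.sum_range_succ]; push_cast; rfl
      have hT : thetaFn (N + 1) = thetaFn N + (if (N + 1).Prime then Real.log (N + 1) else 0) := by
        rw [thetaFn, thetaFn, Finset.sum_range_succ]; push_cast; rfl
      have hkey := key_step N hN
      have h4 : (0 : ℝ) < Real.log 4 := Real.log_pos (by norm_num)
      rw [hS, hT]
      push_cast
      have hsplit : (thetaFn N + Real.log ((N : ℝ) + 1)) / ((N : ℝ) + 1)
          = thetaFn N / ((N : ℝ) + 1) + Real.log ((N : ℝ) + 1) / ((N : ℝ) + 1) := by ring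
      by_cases hp : (N + 1).Prime
      · simp only [hp, if_true]
        linarith
      · simp only [hp, if_false, add_zero]
        linarith

lemma SFn_le (N : ℕ) (hN : 1 ≤ N) : SFn N ≤ Real.log 4 * (1 + Real.log N) := by
  have h := SFn_bound N hN
  have hx0 : (0 : ℝ) < N := by exact_mod_cast hN
  have : thetaFn N / N ≤ Real.log 4 := by
    rw [div_le_iff₀ hx0]
    calc thetaFn N ≤ N * Real.log 4 := thetaFn_le N
      _ = Real.log 4 * N := by ring
  calc SFn N ≤ thetaFn N / N + Real.log 4 * Real.log N := h
    _ ≤ Real.log 4 + Real.log 4 * Real.log N := by linarith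
    _ = Real.log 4 * (1 + Real.log N) := by ring

theorem sum_log_div_p_over_prime_divisors :
    ∃ C : ℝ, 0 < C ∧ ∀ n : ℕ, 3 ≤ n →
      ∑ p ∈ n.primeFactors, Real.log p / p ≤ C * Real.log (Real.log n) := by
  have h4 : (0 : ℝ) < Real.log 4 := Real.log_pos (by norm_num)
  have h2 : (0 : ℝ) < Real.log 2 := Real.log_pos (by norm_num)
  have hlog3 : (1 : ℝ) < Real.log 3 := by
    rw [Real.lt_log_iff_exp_lt (by norm_num)]
    calc Real.exp 1 < 2.7182818286 := Real.exp_one_lt_d9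
      _ < 3 := by norm_num
  set a : ℝ := Real.log 4 * (1 + Real.log 2) + 1 with ha_def
  set b : ℝ := Real.log (Real.log 3) with hb_def
  have hb : 0 < b := Real.log_pos hlog3
  have ha : 0 < a := by positivity
  refine ⟨a / b + Real.log 4, by positivity, ?_⟩
  intro n hn
  have hn0 : 0 < n := by omega
  set L := Real.log n with hL_def
  have h3L : Real.log 3 ≤ L := Real.log_le_log (by norm_num) (by exact_mod_cast hn)
  have hL : 1 < L := lt_of_lt_of_le hlog3 h3L
  have hLL : b ≤ Real.log L := Real.log_le_log (by linarith) h3L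
  have hlogL : 0 < Real.log L := lt_of_lt_of_le hb hLL
  set M := ⌈L⌉₊ with hM_def
  have hM1 : 1 ≤ M := by
    rw [hM_def]
    exact Nat.one_le_iff_ne_zero.2 (by positivity)
  have hML : L ≤ M := Nat.le_ceil L
  have hMle : (M : ℝ) ≤ 2 * L := by
    have := Nat.ceil_lt_add_one (R := ℝ) (a := L) (by linarith)
    rw [← hM_def] at this
    linarith
  have hsplit := Finset.sum_filter_add_sum_filter_not n.primeFactors (fun p => p ≤ M)
    (fun p => Real.log p / p)
  -- part 1 : small primes
  have hsub : (n.primeFactors.filter (fun p => p ≤ M)) ⊆ (Finset.range (M + 1)).filter Nat.Prime := by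
    intro p hp
    rw [Finset.mem_filter] at hp ⊢
    rw [Finset.mem_range, Nat.lt_succ_iff]
    exact ⟨hp.2, (Nat.mem_primeFactors.1 hp.1).1⟩
  have hpart1 : ∑ p ∈ n.primeFactors.filter (fun p => p ≤ M), Real.log p / p ≤ SFn M := by
    rw [SFn, ← Finset.sum_filter]
    apply Finset.sum_le_sum_of_subset_of_nonneg hsub
    intro p hp _
    have hp2 : 2 ≤ p := ((Finset.mem_filter.1 hp).2).two_le
    have : (0 : ℝ) ≤ Real.log p := Real.log_nonneg (by exact_mod_cast Nat.one_le_of_lt hp2)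
    positivity
  have hlogM : Real.log M ≤ Real.log 2 + Real.log L := by
    calc Real.log M ≤ Real.log (2 * L) := Real.log_le_log (by exact_mod_cast hM1) hMle
      _ = Real.log 2 + Real.log L := Real.log_mul (by norm_num) (by linarith)
  have hpart1' : SFn M ≤ Real.log 4 * (1 + Real.log 2 + Real.log L) := by
    calc SFn M ≤ Real.log 4 * (1 + Real.log M) := SFn_le M hM1
      _ ≤ Real.log 4 * (1 + (Real.log 2 + Real.log L)) := by nlinarith
      _ = Real.log 4 * (1 + Real.log 2 + Real.log L) := by ring
  -- part 2 : large primes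
  have hlog_nonneg : ∀ p ∈ n.primeFactors, (0 : ℝ) ≤ Real.log p := by
    intro p hp
    exact Real.log_nonneg (by exact_mod_cast (Nat.prime_of_mem_primeFactors hp).one_lt.le)
  have hlogsum : ∑ p ∈ n.primeFactors, Real.log p ≤ L := by
    have hd := Nat.prod_primeFactors_dvd n
    have hprodpos : 0 < ∏ p ∈ n.primeFactors, p :=
      Finset.prod_pos fun p hp => (Nat.prime_of_mem_primeFactors hp).pos
    have heq : ∑ p ∈ n.primeFactors, Real.log p
        = Real.log ((∏ p ∈ n.primeFactors, p : ℕ) : ℝ) := by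
      rw [Nat.cast_prod, Real.log_prod]
      intro p hp
      have := (Nat.prime_of_mem_primeFactors hp).pos
      positivity
    rw [heq]
    exact Real.log_le_log (by exact_mod_cast hprodpos) (by exact_mod_cast Nat.le_of_dvd hn0 hd)
  have hpart2 : ∑ p ∈ n.primeFactors.filter (fun p => ¬ p ≤ M), Real.log p / p ≤ 1 := by
    have step1 : ∑ p ∈ n.primeFactors.filter (fun p => ¬ p ≤ M), Real.log p / p
        ≤ ∑ p ∈ n.primeFactors.filter (fun p => ¬ p ≤ M), Real.log p / L := by
      apply Finset.sum_le_sum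
      intro p hp
      rw [Finset.mem_filter] at hp
      have hpL : L ≤ (p : ℝ) := le_trans hML (by exact_mod_cast Nat.le_of_not_lt (fun h => hp.2 (Nat.le_of_lt_succ (Nat.lt_succ_of_lt h)))) 
      have := hlog_nonneg p hp.1
      gcongr
      all_goals first | exact hpL | linarith
    have step2 : ∑ p ∈ n.primeFactors.filter (fun p => ¬ p ≤ M), Real.log p / L
        ≤ L / L := by
      rw [← Finset.sum_div]
      apply div_le_div_of_nonneg_right ?_ (by linarith)
      calc ∑ p ∈ n.primeFactors.filter (fun p => ¬ p ≤ M), Real.log p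
          ≤ ∑ p ∈ n.primeFactors, Real.log p :=
            Finset.sum_le_sum_of_subset_of_nonneg (Finset.filter_subset _ _)
              (fun p hp _ => hlog_nonneg p hp)
        _ ≤ L := hlogsum
    have : L / L = 1 := div_self (by linarith)
    linarith
  -- combine
  have htotal : ∑ p ∈ n.primeFactors, Real.log p / p
      ≤ Real.log 4 * Real.log L + a := by
    rw [← hsplit]
    have := le_trans hpart1 hpart1'
    rw [ha_def]
    linarith
  have hfin : a ≤ a / b * Real.log L := by
    rw [div_mul_eq_mul_div, le_div_iff₀ hb]
    nlinarith
  calc ∑ p ∈ n.primeFactors, Real.log p / p ≤ Real.log 4 * Real.log L + a := htotal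
    _ ≤ Real.log 4 * Real.log L + a / b * Real.log L := by linarith
    _ = (a / b + Real.log 4) * Real.log L := by ring
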